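/- Let V be a finite set, p ∈ [0, 1], and let (X_f)_{f ∈ (V × V) \ Δ_V} be independent Bernoulli(p) random variables (edge indicators of an Erdős–Rényi directed graph on V). Let ({σ, σ'}, e) be a fixed almost-d-simplex structure on V (d ≥ 2), i.e. tuples σ, σ' of vertices of V satisfying the combinatorial conditions of an almost-d-simplex with missing pair e. Then the event A = {X_f = 1 for all f ∈ Edg(σ) ∪ Edg(σ')} (the almost-d-simplex is present in the random graph) is independent of the event B = {X_e = 1}; in particular, if P(A) > 0, the conditional probability that the almost-d-simplex is completed given that it is present equals p. -/
import Mathlib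


open MeasureTheory ProbabilityTheory

def IsSimplex {V : Type*} (E : V → V → Prop) {m : ℕ} (σ : Fin m → V) : Prop :=
  Function.Injective σ ∧ ∀ i j : Fin m, i < j → E (σ i) (σ j)

def EdgSet {V : Type*} {m : ℕ} (σ : Fin m → V) : Set (V × V) :=
  {p | ∃ i j : Fin m, i < j ∧ p = (σ i, σ j)}

/-- The purely combinatorial conditions of an almost-simplex structure (tuples of
pairwise distinct vertices, no reference edge relation): obtained by taking the edge
relation to be `fun _ _ => True`. -/
def IsAlmostSimplex {V : Type*} (E : V → V → Prop) {m : ℕ}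
    (σ σ' : Fin (m + 1) → V) (e : V × V) : Prop :=
  IsSimplex E σ ∧ IsSimplex E σ' ∧
  ∃ i i' : Fin (m + 1),
    σ ∘ i.succAbove = σ' ∘ i'.succAbove ∧
    σ i ≠ σ' i' ∧
    ((i ≤ i' ∧ e = (σ i, σ' i')) ∨ (i' ≤ i ∧ e = (σ' i', σ i)))

/-- In an Erdős–Rényi directed graph on a finite vertex set `V`, given by independent
Bernoulli(`p`) edge indicators `X f` for the off-diagonal pairs `f`, the event `A` that
a fixed almost-`d`-simplex structure `({σ, σ'}, e)` (`d = n+2 ≥ 2`) is present (all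
edges of `Edg(σ) ∪ Edg(σ')` exist) is independent of the event `B` that the missing
edge `e` exists; in particular, if `P(A) > 0`, the conditional probability that the
almost-`d`-simplex is completed given that it is present equals `p`. -/
theorem erdos_renyi_almost_simplex_completion {V : Type*} [Fintype V]
    {Ω : Type*} [MeasurableSpace Ω] (P : Measure Ω) [IsProbabilityMeasure P]
    (p : ENNReal) (hp : p ≤ 1)
    (X : V × V → Ω → Bool)
    (hmeas : ∀ f : V × V, Measurable (X f))
    (hbern : ∀ f : V × V, f.1 ≠ f.2 → P {ω | X f ω = true} = p)
    (hindep : iIndepSet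
      (fun f : {f : V × V // f.1 ≠ f.2} => {ω | X f.1 ω = true}) P)
    (n : ℕ) (σ σ' : Fin (n + 2) → V) (e : V × V)
    (h : IsAlmostSimplex (fun _ _ => True) σ σ' e) :
    P ({ω | ∀ f ∈ EdgSet σ ∪ EdgSet σ', X f ω = true} ∩ {ω | X e ω = true})
        = P {ω | ∀ f ∈ EdgSet σ ∪ EdgSet σ', X f ω = true} *
            P {ω | X e ω = true} ∧
    (P {ω | ∀ f ∈ EdgSet σ ∪ EdgSet σ', X f ω = true} ≠ 0 →
      (P[|{ω | ∀ f ∈ EdgSet σ ∪ EdgSet σ', X f ω = true}])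
          {ω | X e ω = true} = p) := by
  classical
  obtain ⟨⟨hσinj, -⟩, ⟨hσ'inj, -⟩, i, i', hface, hne, hcase⟩ := h
  have hface' : ∀ c, σ (i.succAbove c) = σ' (i'.succAbove c) := fun c => congrFun hface c
  -- σ' i' is not in the range of σ
  have hA : ∀ b, σ b ≠ σ' i' := by
    intro b hb
    by_cases hbi : b = i
    · exact hne (hbi ▸ hb)
    · obtain ⟨c, hc⟩ := Fin.exists_succAbove_eq hbi
      rw [← hc, hface' c] at hb
      exact Fin.succAbove_ne i' c (hσ'inj hb)
  -- σ i is not in the range of σ'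
  have hB : ∀ b, σ' b ≠ σ i := by
    intro b hb
    by_cases hbi : b = i'
    · exact hne (hbi ▸ hb).symm
    · obtain ⟨c, hc⟩ := Fin.exists_succAbove_eq hbi
      rw [← hc, ← hface' c] at hb
      exact Fin.succAbove_ne i c (hσinj hb)
  have he_ne : e.1 ≠ e.2 := by
    rcases hcase with ⟨-, rfl⟩ | ⟨-, rfl⟩
    · exact hne
    · exact fun h' => hne h'.symm
  have he_not : e ∉ EdgSet σ ∪ EdgSet σ' := by
    rintro (⟨a, b, -, hab⟩ | ⟨a, b, -, hab⟩)
    · rcases hcase with ⟨-, rfl⟩ | ⟨-, rfl⟩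
      · exact hA b (congrArg Prod.snd hab).symm
      · exact hA a (congrArg Prod.fst hab).symm
    · rcases hcase with ⟨-, rfl⟩ | ⟨-, rfl⟩
      · exact hB a (congrArg Prod.fst hab).symm
      · exact hB b (congrArg Prod.snd hab).symm
  have hSoff : ∀ f ∈ EdgSet σ ∪ EdgSet σ', f.1 ≠ f.2 := by
    rintro f (⟨a, b, hab, rfl⟩ | ⟨a, b, hab, rfl⟩)
    · exact fun h' => absurd (hσinj h') (Fin.ne_of_lt hab)
    · exact fun h' => absurd (hσ'inj h') (Fin.ne_of_lt hab)
  set S : Set (V × V) := EdgSet σ ∪ EdgSet σ' with hS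
  let T : Finset {f : V × V // f.1 ≠ f.2} :=
    Finset.univ.filter (fun f => (f : V × V) ∈ S)
  have hAset : {ω | ∀ f ∈ S, X f ω = true} = ⋂ j ∈ T, {ω | X j.1 ω = true} := by
    ext ω
    simp only [Set.mem_iInter, Set.mem_setOf_eq, Finset.mem_filter, Finset.mem_univ, true_and, T]
    exact ⟨fun h j hj => h _ hj, fun h f hf => h ⟨f, hSoff f hf⟩ hf⟩
  set ebar : {f : V × V // f.1 ≠ f.2} := ⟨e, he_ne⟩ with hebar
  have hemem : ebar ∉ T := by
    simp only [Finset.mem_filter, Finset.mem_univ, true_and, T]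
    exact he_not
  have hBset : {ω | X e ω = true} = {ω | X ebar.1 ω = true} := rfl
  have hmain : P ({ω | ∀ f ∈ S, X f ω = true} ∩ {ω | X e ω = true})
      = P {ω | ∀ f ∈ S, X f ω = true} * P {ω | X e ω = true} := by
    have h1 := hindep.meas_biInter (insert ebar T)
    rw [Finset.set_biInter_insert, Finset.prod_insert hemem] at h1
    rw [hAset, hBset, Set.inter_comm, h1, ← hindep.meas_biInter T]
    exact mul_comm _ _
  refine ⟨hmain, fun hA0 => ?_⟩
  have hAmeas : MeasurableSet {ω | ∀ f ∈ S, X f ω = true} := by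
    rw [hAset]
    refine MeasurableSet.biInter (Set.to_countable _) (fun j _ => ?_)
    exact hmeas j.1 (measurableSet_singleton true)
  rw [cond_apply hAmeas, hmain, hbern e he_ne, ← mul_assoc,
    ENNReal.inv_mul_cancel hA0 (measure_ne_top P _), one_mul]
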